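/- arXiv:1603.05384 — 5 statements merged into one kernel-verified Lean document; each statement's English description precedes it below -/
import Mathlib

section
/- Let F be a field and V an F-vector space. On the set Γ₃ = V × T²V × T³V define the operation (v₁, v₂, v₃) · (v₁', v₂', v₃') = (v₁ + v₁', v₂ + v₂' + [v₁, v₁'], v₃ + v₃' + 3[v₁, v₂'] + 3[v₂, v₁'] + [v₁, v₁', v₁' − v₁]), where brackets are [x, y] = x ⊗ y − y ⊗ x in the tensor algebra and [x, y, z] = [[x, y], z]. Then this operation is associative, (0, 0, 0) is a two-sided identity, and (−v₁, −v₂, −v₃) is a two-sided inverse of (v₁, v₂, v₃); that is, Γ₃ is a group under this operation (with no assumption on the characteristic of F). -/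
/-!
STATEMENT 4: The set `Γ₃ = V × T²V × T³V` with the operation
`(v₁,v₂,v₃)·(v₁',v₂',v₃') = (v₁+v₁', v₂+v₂'+[v₁,v₁'],
v₃+v₃'+3[v₁,v₂']+3[v₂,v₁']+[v₁,v₁',v₁'−v₁])` is a group: the operation is
associative, `(0,0,0)` is a two-sided identity and `(−v₁,−v₂,−v₃)` is a
two-sided inverse (with no assumption on the characteristic of `F`).
-/
open TensorProduct

section LieTuples

variable (F : Type*) {V : Type*} [Field F] [AddCommGroup V] [Module F V]

/-- `[u, w] = u ⊗ w − w ⊗ u ∈ T²V` for `u, w ∈ V`. -/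
noncomputable def br11 (u w : V) : V ⊗[F] V :=
  u ⊗ₜ[F] w - w ⊗ₜ[F] u

/-- `[x, y] = x ⊗ y − y ⊗ x ∈ T³V` for `x ∈ T²V`, `y ∈ V`, where the tensor
`y ⊗ x ∈ V ⊗ T²V` is rewritten in `T³V = (V ⊗ V) ⊗ V` via the associator. -/
noncomputable def br21 (x : V ⊗[F] V) (y : V) : (V ⊗[F] V) ⊗[F] V :=
  x ⊗ₜ[F] y - (TensorProduct.assoc F V V V).symm (y ⊗ₜ[F] x)

/-- `[y, x] = y ⊗ x − x ⊗ y ∈ T³V` for `y ∈ V`, `x ∈ T²V`. -/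
noncomputable def br12 (y : V) (x : V ⊗[F] V) : (V ⊗[F] V) ⊗[F] V :=
  (TensorProduct.assoc F V V V).symm (y ⊗ₜ[F] x) - x ⊗ₜ[F] y

/-- The canonical isomorphism `V ⊗ T³V ≃ T⁴V` built from associators. -/
noncomputable def e13 : (V ⊗[F] ((V ⊗[F] V) ⊗[F] V)) ≃ₗ[F] ((V ⊗[F] V) ⊗[F] V) ⊗[F] V :=
  (TensorProduct.assoc F V (V ⊗[F] V) V).symm ≪≫ₗ
    TensorProduct.congr (TensorProduct.assoc F V V V).symm (LinearEquiv.refl F V)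

/-- The canonical isomorphism `T²V ⊗ T²V ≃ T⁴V` built from the associator. -/
noncomputable def e22 : ((V ⊗[F] V) ⊗[F] (V ⊗[F] V)) ≃ₗ[F] ((V ⊗[F] V) ⊗[F] V) ⊗[F] V :=
  (TensorProduct.assoc F (V ⊗[F] V) V V).symm

/-- `[y, z] ∈ T⁴V` for `y ∈ V`, `z ∈ T³V`. -/
noncomputable def br13 (y : V) (z : (V ⊗[F] V) ⊗[F] V) : ((V ⊗[F] V) ⊗[F] V) ⊗[F] V :=
  e13 F (y ⊗ₜ[F] z) - z ⊗ₜ[F] y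

/-- `[z, y] ∈ T⁴V` for `z ∈ T³V`, `y ∈ V`. -/
noncomputable def br31 (z : (V ⊗[F] V) ⊗[F] V) (y : V) : ((V ⊗[F] V) ⊗[F] V) ⊗[F] V :=
  z ⊗ₜ[F] y - e13 F (y ⊗ₜ[F] z)

/-- `[x, x'] ∈ T⁴V` for `x, x' ∈ T²V`. -/
noncomputable def br22 (x x' : V ⊗[F] V) : ((V ⊗[F] V) ⊗[F] V) ⊗[F] V :=
  e22 F (x ⊗ₜ[F] x') - e22 F (x' ⊗ₜ[F] x)

/-- The multiplication of Lie 3-tuples, on `Γ₃ = V × T²V × T³V`. -/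
noncomputable def gamma3Mul (a b : V × (V ⊗[F] V) × ((V ⊗[F] V) ⊗[F] V)) :
    V × (V ⊗[F] V) × ((V ⊗[F] V) ⊗[F] V) :=
  (a.1 + b.1,
   a.2.1 + b.2.1 + br11 F a.1 b.1,
   a.2.2 + b.2.2 + 3 • br12 F a.1 b.2.1 + 3 • br21 F a.2.1 b.1
     + br21 F (br11 F a.1 b.1) (b.1 - a.1))

/-- The multiplication of Lie 4-tuples, on `Γ₄ = V × T²V × T³V × T⁴V`. -/
noncomputable def gamma4Mul
    (a b : V × (V ⊗[F] V) × ((V ⊗[F] V) ⊗[F] V) × (((V ⊗[F] V) ⊗[F] V) ⊗[F] V)) :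
    V × (V ⊗[F] V) × ((V ⊗[F] V) ⊗[F] V) × (((V ⊗[F] V) ⊗[F] V) ⊗[F] V) :=
  (a.1 + b.1,
   a.2.1 + b.2.1 + br11 F a.1 b.1,
   a.2.2.1 + b.2.2.1 + 3 • br12 F a.1 b.2.1 + 3 • br21 F a.2.1 b.1
     + br21 F (br11 F a.1 b.1) (b.1 - a.1),
   a.2.2.2 + b.2.2.2 + br13 F a.1 b.2.2.1 + 3 • br22 F a.2.1 b.2.1
     + br31 F a.2.2.1 b.1
     + br31 F (br21 F a.2.1 b.1) (b.1 - a.1)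
     + br31 F (br12 F a.1 b.2.1) (b.1 - a.1)
     + br22 F (br11 F a.1 b.1) (b.2.1 - a.2.1)
     - br31 F (br21 F (br11 F a.1 b.1) a.1) b.1)

end LieTuples


theorem gamma3_is_group (F V : Type*) [Field F] [AddCommGroup V] [Module F V] :
    (∀ a b c : V × (V ⊗[F] V) × ((V ⊗[F] V) ⊗[F] V),
        gamma3Mul F (gamma3Mul F a b) c = gamma3Mul F a (gamma3Mul F b c)) ∧
    (∀ a : V × (V ⊗[F] V) × ((V ⊗[F] V) ⊗[F] V),
        gamma3Mul F ((0, 0, 0) : V × (V ⊗[F] V) × ((V ⊗[F] V) ⊗[F] V)) a = a ∧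
        gamma3Mul F a ((0, 0, 0) : V × (V ⊗[F] V) × ((V ⊗[F] V) ⊗[F] V)) = a) ∧
    (∀ a : V × (V ⊗[F] V) × ((V ⊗[F] V) ⊗[F] V),
        gamma3Mul F (-a.1, -a.2.1, -a.2.2) a = ((0, 0, 0) : V × (V ⊗[F] V) × ((V ⊗[F] V) ⊗[F] V)) ∧
        gamma3Mul F a (-a.1, -a.2.1, -a.2.2) = ((0, 0, 0) : V × (V ⊗[F] V) × ((V ⊗[F] V) ⊗[F] V))) := by

  refine ⟨?_, ?_, ?_⟩
  · rintro ⟨a1, a2, a3⟩ ⟨b1, b2, b3⟩ ⟨c1, c2, c3⟩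
    simp only [gamma3Mul, Prod.mk.injEq, br11, br21, br12]
    refine ⟨by abel, ?_, ?_⟩ <;>
    · simp only [tmul_add, add_tmul, tmul_sub, sub_tmul, map_add, map_sub,
        TensorProduct.assoc_symm_tmul, smul_sub, smul_add]
      abel
  · rintro ⟨a1, a2, a3⟩
    simp only [gamma3Mul, Prod.mk.injEq, br11, br21, br12]
    constructor <;>
    · refine ⟨by abel, ?_, ?_⟩ <;>
      · simp only [tmul_zero, zero_tmul, map_zero, sub_zero, zero_sub, add_zero, zero_add,
          sub_self, smul_zero, neg_zero]
        try abel
  · rintro ⟨a1, a2, a3⟩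
    simp only [gamma3Mul, Prod.mk.injEq, br11, br21, br12]
    constructor <;>
    · refine ⟨by abel, ?_, ?_⟩ <;>
      · simp only [tmul_neg, neg_tmul, tmul_sub, sub_tmul, tmul_add, add_tmul, map_sub, map_add,
          map_neg, neg_neg, sub_neg_eq_add, sub_self, smul_zero, smul_sub, smul_add, neg_zero,
          tmul_zero, zero_tmul, map_zero, sub_zero, zero_sub, add_zero, zero_add]
        abel
end

section
/- Let F be a field and V an F-vector space. On the set Γ₄ = V × T²V × T³V × T⁴V define the operation (v₁, v₂, v₃, v₄) · (v₁', v₂', v₃', v₄') whose first three coordinates are v₁ + v₁', v₂ + v₂' + [v₁, v₁'], and v₃ + v₃' + 3[v₁, v₂'] + 3[v₂, v₁'] + [v₁, v₁', v₁' − v₁], and whose fourth coordinate is v₄ + v₄' + [v₁, v₃'] + 3[v₂, v₂'] + [v₃, v₁'] + [v₂, v₁', v₁' − v₁] + [v₁, v₂', v₁' − v₁] + [v₁, v₁', v₂' − v₂] − [v₁, v₁', v₁, v₁'], where brackets are [x, y] = x ⊗ y − y ⊗ x in the tensor algebra and left-normed brackets are [x, y, z] = [[x, y], z] and [x, y, z,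 w] = [[[x, y], z], w]. Then this operation is associative, (0, 0, 0, 0) is a two-sided identity, and (−v₁, −v₂, −v₃, −v₄) is a two-sided inverse of (v₁, v₂, v₃, v₄); that is, Γ₄ is a group under this operation. -/
/-!
STATEMENT 5: The set `Γ₄ = V × T²V × T³V × T⁴V` with the stated operation
(whose fourth coordinate is
`v₄+v₄'+[v₁,v₃']+3[v₂,v₂']+[v₃,v₁']+[v₂,v₁',v₁'−v₁]+[v₁,v₂',v₁'−v₁]
+[v₁,v₁',v₂'−v₂]−[v₁,v₁',v₁,v₁']`) is a group: the operation is associative,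
`(0,0,0,0)` is a two-sided identity and `(−v₁,−v₂,−v₃,−v₄)` is a two-sided
inverse.
-/
open TensorProduct

section AuxLemmas
variable (F : Type*) {V : Type*} [Field F] [AddCommGroup V] [Module F V]

lemma L1 (v w : V) (x : V ⊗[F] V) :
    e13 F (v ⊗ₜ[F] (x ⊗ₜ[F] w)) = ((TensorProduct.assoc F V V V).symm (v ⊗ₜ[F] x)) ⊗ₜ[F] w := by
  simp [e13]

lemma L3 (x : V ⊗[F] V) (v w : V) :
    e22 F (x ⊗ₜ[F] (v ⊗ₜ[F] w)) = (x ⊗ₜ[F] v) ⊗ₜ[F] w := by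
  simp [e22]

lemma L2 (v w : V) (x : V ⊗[F] V) :
    e13 F (v ⊗ₜ[F] ((TensorProduct.assoc F V V V).symm (w ⊗ₜ[F] x)))
      = e22 F ((v ⊗ₜ[F] w) ⊗ₜ[F] x) := by
  induction x using TensorProduct.induction_on with
  | zero => simp
  | tmul a b => simp [e13, e22]
  | add a b ha hb => simp only [map_add, tmul_add] at *; rw [ha, hb]

lemma smul3 {M : Type*} [AddCommGroup M] (x : M) : (3:ℕ) • x = x + x + x := by abel
end AuxLemmas

section Helpers
variable (F : Type*) {V : Type*} [Field F] [AddCommGroup V] [Module F V]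

lemma e13_add (x y : V ⊗[F] ((V ⊗[F] V) ⊗[F] V)) :
    e13 F (x + y) = e13 F x + e13 F y := by exact map_add (e13 (V := V) F) x y
lemma e13_sub (x y : V ⊗[F] ((V ⊗[F] V) ⊗[F] V)) :
    e13 F (x - y) = e13 F x - e13 F y := by exact map_sub (e13 (V := V) F) x y
lemma e13_neg (x : V ⊗[F] ((V ⊗[F] V) ⊗[F] V)) :
    e13 F (-x) = - e13 F x := by exact map_neg (e13 (V := V) F) x
lemma e13_zero : e13 (V := V) F 0 = 0 := by exact map_zero (e13 (V := V) F)
lemma e22_add (x y : (V ⊗[F] V) ⊗[F] (V ⊗[F] V)) :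
    e22 F (x + y) = e22 F x + e22 F y := by exact map_add (e22 (V := V) F) x y
lemma e22_sub (x y : (V ⊗[F] V) ⊗[F] (V ⊗[F] V)) :
    e22 F (x - y) = e22 F x - e22 F y := by exact map_sub (e22 (V := V) F) x y
lemma e22_neg (x : (V ⊗[F] V) ⊗[F] (V ⊗[F] V)) :
    e22 F (-x) = - e22 F x := by exact map_neg (e22 (V := V) F) x
lemma e22_zero : e22 (V := V) F 0 = 0 := by exact map_zero (e22 (V := V) F)
lemma asc_add (x y : V ⊗[F] (V ⊗[F] V)) :
    (TensorProduct.assoc F V V V).symm (x + y)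
      = (TensorProduct.assoc F V V V).symm x + (TensorProduct.assoc F V V V).symm y := by
  exact map_add (TensorProduct.assoc F V V V).symm x y
lemma asc_sub (x y : V ⊗[F] (V ⊗[F] V)) :
    (TensorProduct.assoc F V V V).symm (x - y)
      = (TensorProduct.assoc F V V V).symm x - (TensorProduct.assoc F V V V).symm y := by
  exact map_sub (TensorProduct.assoc F V V V).symm x y
lemma asc_neg (x : V ⊗[F] (V ⊗[F] V)) :
    (TensorProduct.assoc F V V V).symm (-x) = - (TensorProduct.assoc F V V V).symm x := by
  exact map_neg (TensorProduct.assoc F V V V).symm x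
lemma asc_zero : (TensorProduct.assoc F V V V).symm 0 = (0 : (V ⊗[F] V) ⊗[F] V) := by
  exact map_zero (TensorProduct.assoc F V V V).symm
end Helpers



set_option maxHeartbeats 1000000 in
theorem gamma4_is_group (F V : Type*) [Field F] [AddCommGroup V] [Module F V] :
    (∀ a b c : V × (V ⊗[F] V) × ((V ⊗[F] V) ⊗[F] V) × (((V ⊗[F] V) ⊗[F] V) ⊗[F] V),
        gamma4Mul F (gamma4Mul F a b) c = gamma4Mul F a (gamma4Mul F b c)) ∧
    (∀ a : V × (V ⊗[F] V) × ((V ⊗[F] V) ⊗[F] V) × (((V ⊗[F] V) ⊗[F] V) ⊗[F] V),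
        gamma4Mul F ((0, 0, 0, 0) : V × (V ⊗[F] V) × ((V ⊗[F] V) ⊗[F] V) × (((V ⊗[F] V) ⊗[F] V) ⊗[F] V)) a = a ∧
        gamma4Mul F a ((0, 0, 0, 0) : V × (V ⊗[F] V) × ((V ⊗[F] V) ⊗[F] V) × (((V ⊗[F] V) ⊗[F] V) ⊗[F] V)) = a) ∧
    (∀ a : V × (V ⊗[F] V) × ((V ⊗[F] V) ⊗[F] V) × (((V ⊗[F] V) ⊗[F] V) ⊗[F] V),
        gamma4Mul F (-a.1, -a.2.1, -a.2.2.1, -a.2.2.2) a = ((0, 0, 0, 0) : V × (V ⊗[F] V) × ((V ⊗[F] V) ⊗[F] V) × (((V ⊗[F] V) ⊗[F] V) ⊗[F] V)) ∧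
        gamma4Mul F a (-a.1, -a.2.1, -a.2.2.1, -a.2.2.2) = ((0, 0, 0, 0) : V × (V ⊗[F] V) × ((V ⊗[F] V) ⊗[F] V) × (((V ⊗[F] V) ⊗[F] V) ⊗[F] V))) := by
  have key : ∀ a b c : V × (V ⊗[F] V) × ((V ⊗[F] V) ⊗[F] V) × (((V ⊗[F] V) ⊗[F] V) ⊗[F] V),
      gamma4Mul F (gamma4Mul F a b) c = gamma4Mul F a (gamma4Mul F b c) := by
    rintro ⟨a1, a2, a3, a4⟩ ⟨b1, b2, b3, b4⟩ ⟨c1, c2, c3, c4⟩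
    simp only [gamma4Mul, br11, br12, br21, br13, br31, br22, smul3, Prod.mk.injEq,
      tmul_zero, zero_tmul, tmul_sub, sub_tmul, tmul_add, add_tmul, tmul_neg, neg_tmul,
      TensorProduct.assoc_symm_tmul, e13_add, e13_sub, e13_neg, e13_zero,
      e22_add, e22_sub, e22_neg, e22_zero, asc_add, asc_sub, asc_neg, asc_zero,
      L1, L2, L3, sub_zero, sub_self, add_zero, zero_add, zero_sub, neg_neg,
      sub_neg_eq_add, smul_zero, neg_zero]
    refine ⟨by abel, by abel, by abel, by abel⟩
  refine ⟨key, ?_, ?_⟩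
  · rintro ⟨a1, a2, a3, a4⟩
    constructor <;>
    · simp only [gamma4Mul, br11, br12, br21, br13, br31, br22, smul3, Prod.mk.injEq,
        tmul_zero, zero_tmul, tmul_sub, sub_tmul, tmul_add, add_tmul, tmul_neg, neg_tmul,
        TensorProduct.assoc_symm_tmul, e13_add, e13_sub, e13_neg, e13_zero,
        e22_add, e22_sub, e22_neg, e22_zero, asc_add, asc_sub, asc_neg, asc_zero,
        L1, L2, L3, sub_zero, sub_self, add_zero, zero_add, zero_sub, neg_neg,
        sub_neg_eq_add, smul_zero, neg_zero]
      exact ⟨trivial, trivial, trivial, by abel⟩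
  · rintro ⟨a1, a2, a3, a4⟩
    constructor <;>
    · simp only [gamma4Mul, br11, br12, br21, br13, br31, br22, smul3, Prod.mk.injEq,
        tmul_zero, zero_tmul, tmul_sub, sub_tmul, tmul_add, add_tmul, tmul_neg, neg_tmul,
        TensorProduct.assoc_symm_tmul, e13_add, e13_sub, e13_neg, e13_zero,
        e22_add, e22_sub, e22_neg, e22_zero, asc_add, asc_sub, asc_neg, asc_zero,
        L1, L2, L3, sub_zero, sub_self, add_zero, zero_add, zero_sub, neg_neg,
        sub_neg_eq_add, smul_zero, neg_zero]
      try exact ⟨by abel, by abel, by abel, by abel⟩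
end

section
/- Let F be a field, V an F-vector space, and Γ₃ = V × T²V × T³V the group with operation (v₁, v₂, v₃)(v₁', v₂', v₃') = (v₁ + v₁', v₂ + v₂' + [v₁, v₁'], v₃ + v₃' + 3[v₁, v₂'] + 3[v₂, v₁'] + [v₁, v₁', v₁' − v₁]). Then for all g = (v₁, v₂, v₃), g' = (v₁', v₂', v₃'), g'' = (v₁'', v₂'', v₃'') in Γ₃, the left-normed group commutator satisfies [g, g', g''] = (0, 0, 12 [v₁, v₁', v₁'']), where on the right the bracket is the left-normed tensor-algebra bracket [x, y, z] = [[x, y], z] with [x, y] = x ⊗ y − y ⊗ x. -/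
/-!
STATEMENT 6: In the group `Γ₃ = V × T²V × T³V`, the left-normed group commutator
`[g, g', g''] = [[g, g'], g'']` (with `[g, g'] = g⁻¹g'⁻¹gg'`) satisfies
`[g, g', g''] = (0, 0, 12 [v₁, v₁', v₁''])`, where on the right the bracket is
the left-normed tensor-algebra bracket.
-/
open TensorProduct

/-- The inverse `(−v₁, −v₂, −v₃)` in `Γ₃`. -/
noncomputable def gamma3Inv (F : Type*) {V : Type*} [Field F] [AddCommGroup V]
    [Module F V] (a : V × (V ⊗[F] V) × ((V ⊗[F] V) ⊗[F] V)) : V × (V ⊗[F] V) × ((V ⊗[F] V) ⊗[F] V) :=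
  (-a.1, -a.2.1, -a.2.2)

/-- The group commutator `[g, g'] = g⁻¹ g'⁻¹ g g'` in `Γ₃`. -/
noncomputable def gamma3Comm (F : Type*) {V : Type*} [Field F] [AddCommGroup V]
    [Module F V] (g g' : V × (V ⊗[F] V) × ((V ⊗[F] V) ⊗[F] V)) : V × (V ⊗[F] V) × ((V ⊗[F] V) ⊗[F] V) :=
  gamma3Mul F (gamma3Mul F (gamma3Mul F (gamma3Inv F g) (gamma3Inv F g')) g) g'

set_option maxHeartbeats 4000000 in
theorem gamma3_commutator (F V : Type*) [Field F] [AddCommGroup V] [Module F V]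
    (g g' g'' : V × (V ⊗[F] V) × ((V ⊗[F] V) ⊗[F] V)) :
    gamma3Comm F (gamma3Comm F g g') g'' =
      ((0, 0, 12 • br21 F (br11 F g.1 g'.1) g''.1) : V × (V ⊗[F] V) × ((V ⊗[F] V) ⊗[F] V)) := by
  obtain ⟨a1, a2, a3⟩ := g
  obtain ⟨b1, b2, b3⟩ := g'
  obtain ⟨c1, c2, c3⟩ := g''
  simp only [gamma3Comm, gamma3Mul, gamma3Inv, br11, br21, br12, Prod.mk.injEq]
  refine ⟨by abel, ?_, ?_⟩
  · simp only [tmul_add, add_tmul, tmul_sub, sub_tmul, tmul_neg, neg_tmul]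
    abel
  · simp only [tmul_add, add_tmul, tmul_sub, sub_tmul, tmul_neg, neg_tmul, smul_sub, smul_add,
      smul_neg, map_add, map_sub, map_neg, map_smul, map_nsmul, tmul_smul, ← smul_tmul', smul_smul]
    abel
end

section
/- Let F be a field, V an F-vector space, and Γ₄ = V × T²V × T³V × T⁴V the group whose multiplication has coordinates v₁ + v₁'; v₂ + v₂' + [v₁, v₁']; v₃ + v₃' + 3[v₁, v₂'] + 3[v₂, v₁'] + [v₁, v₁', v₁' − v₁]; and v₄ + v₄' + [v₁, v₃'] + 3[v₂, v₂'] + [v₃, v₁'] + [v₂, v₁', v₁' − v₁] + [v₁, v₂', v₁' − v₁] + [v₁, v₁', v₂' − v₂] − [v₁, v₁', v₁, v₁']. Then for all g, g', g'', g''' in Γ₄ with first coordinates v₁, v₁', v₁'', v₁''' respectively, the left-normed group commutator satisfies [g, g', g'', g'''] = (0, 0, 0, 24 [v₁, v₁', v₁'', v₁''']), where on the right the bracket is the left-normed tensor-algebra bracket. -/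
/-!
STATEMENT 7: In the group `Γ₄ = V × T²V × T³V × T⁴V`, the left-normed group
commutator of four elements `[[[g, g₂], g₃], g₄]` (with commutator convention
`g⁻¹h⁻¹gh`) equals `(0, 0, 0, 24 [v₁, v₁', v₁'', v₁'''])`, where on the right
the bracket is the left-normed tensor-algebra bracket of the first coordinates.
-/
open TensorProduct

/-- The inverse `(−v₁, −v₂, −v₃, −v₄)` in `Γ₄`. -/
noncomputable def gamma4Inv (F : Type*) {V : Type*} [Field F] [AddCommGroup V]
    [Module F V] (a : V × (V ⊗[F] V) × ((V ⊗[F] V) ⊗[F] V) × (((V ⊗[F] V) ⊗[F] V) ⊗[F] V)) : V × (V ⊗[F] V) × ((V ⊗[F] V) ⊗[F] V) × (((V ⊗[F] V) ⊗[F] V) ⊗[F] V) :=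
  (-a.1, -a.2.1, -a.2.2.1, -a.2.2.2)

/-- The group commutator `[g, g'] = g⁻¹ g'⁻¹ g g'` in `Γ₄`. -/
noncomputable def gamma4Comm (F : Type*) {V : Type*} [Field F] [AddCommGroup V]
    [Module F V] (g g' : V × (V ⊗[F] V) × ((V ⊗[F] V) ⊗[F] V) × (((V ⊗[F] V) ⊗[F] V) ⊗[F] V)) : V × (V ⊗[F] V) × ((V ⊗[F] V) ⊗[F] V) × (((V ⊗[F] V) ⊗[F] V) ⊗[F] V) :=
  gamma4Mul F (gamma4Mul F (gamma4Mul F (gamma4Inv F g) (gamma4Inv F g')) g) g'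

section Aux

variable (F : Type*) {V : Type*} [Field F] [AddCommGroup V] [Module F V]

set_option maxSynthPendingDepth 5 in
lemma br21_nsmul (n : ℕ) (x : V ⊗[F] V) (y : V) :
    br21 F (n • x) y = n • br21 F x y := by
  simp only [br21, ← Nat.cast_smul_eq_nsmul F, ← smul_tmul', tmul_smul, smul_sub, map_smul]

set_option maxSynthPendingDepth 5 in
lemma br31_nsmul (n : ℕ) (z : (V ⊗[F] V) ⊗[F] V) (y : V) :
    br31 F (n • z) y = n • br31 F z y := by
  simp only [br31, ← Nat.cast_smul_eq_nsmul F, ← smul_tmul', tmul_smul, smul_sub, map_smul]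

set_option maxHeartbeats 1600000 in
set_option maxSynthPendingDepth 5 in
lemma gamma4Comm_L3 (c3 : (V ⊗[F] V) ⊗[F] V) (c4 : ((V ⊗[F] V) ⊗[F] V) ⊗[F] V)
    (g : V × (V ⊗[F] V) × ((V ⊗[F] V) ⊗[F] V) × (((V ⊗[F] V) ⊗[F] V) ⊗[F] V)) :
    gamma4Comm F (0, 0, c3, c4) g = (0, 0, 0, 2 • br31 F c3 g.1) := by
  obtain ⟨v1, v2, v3, v4⟩ := g
  simp only [gamma4Comm, gamma4Mul, gamma4Inv, br11, br21, br12, br13, br31, br22, e13, e22,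
    Prod.mk.injEq, smul_add, smul_sub, smul_neg,
    add_tmul, tmul_add, sub_tmul, tmul_sub, neg_tmul, tmul_neg, zero_tmul, tmul_zero,
    map_add, map_sub, map_neg, map_zero, LinearEquiv.trans_apply,
    TensorProduct.assoc_symm_tmul, TensorProduct.assoc_tmul, TensorProduct.congr_tmul,
    LinearEquiv.refl_apply, neg_neg, neg_zero, smul_zero, add_zero, zero_add, sub_zero,
    zero_sub, sub_self]
  refine ⟨by abel, by abel, by abel, by abel_nf; simp⟩

set_option maxHeartbeats 1600000 in
set_option maxSynthPendingDepth 5 in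
lemma gamma4Comm_L2 (b2 : V ⊗[F] V) (b3 : (V ⊗[F] V) ⊗[F] V)
    (b4 : ((V ⊗[F] V) ⊗[F] V) ⊗[F] V)
    (g : V × (V ⊗[F] V) × ((V ⊗[F] V) ⊗[F] V) × (((V ⊗[F] V) ⊗[F] V) ⊗[F] V)) :
    ∃ w, gamma4Comm F (0, b2, b3, b4) g = (0, 0, 6 • br21 F b2 g.1, w) := by
  refine ⟨(gamma4Comm F (0, b2, b3, b4) g).2.2.2, ?_⟩
  obtain ⟨v1, v2, v3, v4⟩ := g
  refine Prod.ext ?_ (Prod.ext ?_ (Prod.ext ?_ rfl)) <;>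
  · simp only [gamma4Comm, gamma4Mul, gamma4Inv, br11, br21, br12, br13, br31, br22, e13, e22,
      smul_add, smul_sub, smul_neg,
      add_tmul, tmul_add, sub_tmul, tmul_sub, neg_tmul, tmul_neg, zero_tmul, tmul_zero,
      map_add, map_sub, map_neg, map_zero, LinearEquiv.trans_apply,
      TensorProduct.assoc_symm_tmul, TensorProduct.assoc_tmul, TensorProduct.congr_tmul,
      LinearEquiv.refl_apply, neg_neg, neg_zero, smul_zero, add_zero, zero_add, sub_zero,
      zero_sub, sub_self]
    abel

set_option maxHeartbeats 1600000 in
set_option maxSynthPendingDepth 5 in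
lemma gamma4Comm_L1
    (g g' : V × (V ⊗[F] V) × ((V ⊗[F] V) ⊗[F] V) × (((V ⊗[F] V) ⊗[F] V) ⊗[F] V)) :
    ∃ c3 c4, gamma4Comm F g g' = (0, 2 • br11 F g.1 g'.1, c3, c4) := by
  refine ⟨(gamma4Comm F g g').2.2.1, (gamma4Comm F g g').2.2.2, ?_⟩
  obtain ⟨v1, v2, v3, v4⟩ := g
  obtain ⟨w1, w2, w3, w4⟩ := g'
  refine Prod.ext ?_ (Prod.ext ?_ rfl) <;>
  · simp only [gamma4Comm, gamma4Mul, gamma4Inv, br11, br21, br12, br13, br31, br22, e13, e22,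
      smul_add, smul_sub, smul_neg,
      add_tmul, tmul_add, sub_tmul, tmul_sub, neg_tmul, tmul_neg, zero_tmul, tmul_zero,
      map_add, map_sub, map_neg, map_zero, LinearEquiv.trans_apply,
      TensorProduct.assoc_symm_tmul, TensorProduct.assoc_tmul, TensorProduct.congr_tmul,
      LinearEquiv.refl_apply, neg_neg, neg_zero, smul_zero, add_zero, zero_add, sub_zero,
      zero_sub, sub_self]
    abel

end Aux

theorem gamma4_commutator (F V : Type*) [Field F] [AddCommGroup V] [Module F V]
    (g₁ g₂ g₃ g₄ : V × (V ⊗[F] V) × ((V ⊗[F] V) ⊗[F] V) × (((V ⊗[F] V) ⊗[F] V) ⊗[F] V)) :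
    gamma4Comm F (gamma4Comm F (gamma4Comm F g₁ g₂) g₃) g₄ =
      ((0, 0, 0, 24 • br31 F (br21 F (br11 F g₁.1 g₂.1) g₃.1) g₄.1) : V × (V ⊗[F] V) × ((V ⊗[F] V) ⊗[F] V) × (((V ⊗[F] V) ⊗[F] V) ⊗[F] V)) := by
  obtain ⟨c3, c4, h1⟩ := gamma4Comm_L1 F g₁ g₂
  rw [h1]
  obtain ⟨w, h2⟩ := gamma4Comm_L2 F (2 • br11 F g₁.1 g₂.1) c3 c4 g₃
  rw [h2, br21_nsmul, smul_smul, gamma4Comm_L3, br31_nsmul, smul_smul]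
  norm_num
end

section
/- Let F be a finite field of odd characteristic, V a finite-dimensional F-vector space with dim V = d > 2, U a subspace with 0 < U < V, and H = {g ∈ GL(V) : g(U) = U}. Let U ∧ V denote the subspace of Λ²V spanned by the elements u ∧ v with u ∈ U, v ∈ V, and let Λ²U denote the image of the canonical map Λ²U → Λ²V. Then Λ²V is a uniserial H-module: the subspaces of Λ²V invariant under Λ²g for every g ∈ H are exactly {0}, Λ²U, U ∧ V, and Λ²V (some of which may coincide). In particular, Λ²V is a reducible H-module. -/
/-!
STATEMENT 15: `F` a finite field of odd characteristic, `V` of finite dimension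
`d > 2`, `0 < U < V` a subspace and `H = {g ∈ GL(V) : g(U) = U}`.  Then `Λ²V`
is a uniserial `H`-module: the subspaces of `Λ²V` invariant under `Λ²g` for all
`g ∈ H` are exactly `{0}`, `Λ²U`, `U ∧ V` and `Λ²V` (some of which may
coincide).  In particular `Λ²V` is a reducible `H`-module.
-/

set_option synthInstance.maxHeartbeats 1000000
set_option maxHeartbeats 4000000

open TensorProduct ExteriorAlgebra

open TensorProduct ExteriorAlgebra

section Ext

variable (F : Type*) {V W : Type*} [Field F] [AddCommGroup V] [Module F V]
  [AddCommGroup W] [Module F W]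

/-- The morphism of exterior algebras induced by a linear map sends the `n`-th
exterior power into the `n`-th exterior power. -/
lemma exteriorPower_map_mem (n : ℕ) (f : V →ₗ[F] W) {x : ExteriorAlgebra F V}
    (hx : x ∈ ⋀[F]^n V) : ExteriorAlgebra.map f x ∈ ⋀[F]^n W := by
  rw [← ExteriorAlgebra.ιMulti_span_fixedDegree] at hx ⊢
  induction hx using Submodule.span_induction with
  | mem y hy =>
      obtain ⟨m, rfl⟩ := hy
      rw [ExteriorAlgebra.map_apply_ιMulti]
      exact Submodule.subset_span ⟨_, rfl⟩
  | zero => simp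
  | add a b _ _ h1 h2 => simpa using add_mem h1 h2
  | smul c a _ h => simpa using Submodule.smul_mem _ c h

/-- The linear map `⋀ⁿ f : ⋀ⁿ V → ⋀ⁿ W` induced by a linear map `f : V → W`. -/
noncomputable def extPowMap (n : ℕ) (f : V →ₗ[F] W) : ⋀[F]^n V →ₗ[F] ⋀[F]^n W :=
  (ExteriorAlgebra.map f).toLinearMap.restrict
    (fun _ hx => exteriorPower_map_mem F n f hx)

/-- The wedge `u ∧ v` as an element of the second exterior power `⋀²V`. -/
noncomputable def wedge2 (u v : V) : ⋀[F]^2 V :=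
  ⟨ExteriorAlgebra.ιMulti F 2 ![u, v],
    ExteriorAlgebra.ιMulti_range F 2 (Set.mem_range_self _)⟩

/-- The wedge `u ∧ v ∧ w` as an element of the third exterior power `⋀³V`. -/
noncomputable def wedge3 (u v w : V) : ⋀[F]^3 V :=
  ⟨ExteriorAlgebra.ιMulti F 3 ![u, v, w],
    ExteriorAlgebra.ιMulti_range F 3 (Set.mem_range_self _)⟩

end Ext

section Defs

variable (F : Type*) {V : Type*} [Field F] [AddCommGroup V] [Module F V]

/-- The subspace `U ∧ V` of `Λ²V` spanned by the wedges `u ∧ v`, `u ∈ U`, `v ∈ V`. -/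
noncomputable def UwedgeV (U : Submodule F V) : Submodule F (⋀[F]^2 V) :=
  Submodule.span F {x | ∃ u v : V, u ∈ U ∧ x = wedge2 F u v}

/-- The image of `Λ²U` in `Λ²V` under the map induced by the inclusion `U → V`. -/
noncomputable def lambda2U (U : Submodule F V) : Submodule F (⋀[F]^2 V) :=
  LinearMap.range (extPowMap F 2 U.subtype)

end Defs

section Aux1

open ExteriorAlgebra

variable (F : Type*) {V W : Type*} [Field F] [AddCommGroup V] [Module F V]
  [AddCommGroup W] [Module F W]

lemma wedge2_val (u v : V) : (wedge2 F u v : ExteriorAlgebra F V) = ι F u * ι F v := by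
  show ιMulti F 2 ![u, v] = _
  rw [ExteriorAlgebra.ιMulti_succ_apply, ExteriorAlgebra.ιMulti_succ_apply,
    ExteriorAlgebra.ιMulti_zero_apply]
  simp [Matrix.vecTail]

lemma wedge2_add_left (u u' v : V) :
    wedge2 F (u + u') v = wedge2 F u v + wedge2 F u' v := by
  apply Subtype.ext
  simp [wedge2_val, add_mul]

lemma wedge2_add_right (u v v' : V) :
    wedge2 F u (v + v') = wedge2 F u v + wedge2 F u v' := by
  apply Subtype.ext
  simp [wedge2_val, mul_add]

lemma wedge2_smul_left (c : F) (u v : V) :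
    wedge2 F (c • u) v = c • wedge2 F u v := by
  apply Subtype.ext
  simp [wedge2_val, smul_mul_assoc]

lemma wedge2_smul_right (c : F) (u v : V) :
    wedge2 F u (c • v) = c • wedge2 F u v := by
  apply Subtype.ext
  simp [wedge2_val, mul_smul_comm]

lemma wedge2_zero_left (v : V) : wedge2 F 0 v = 0 := by
  apply Subtype.ext; simp [wedge2_val]

lemma wedge2_zero_right (v : V) : wedge2 F v 0 = 0 := by
  apply Subtype.ext; simp [wedge2_val]

lemma wedge2_self (u : V) : wedge2 F u u = 0 := by
  apply Subtype.ext; simp [wedge2_val, ι_sq_zero]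

lemma wedge2_swap (u v : V) : wedge2 F v u = - wedge2 F u v := by
  apply Subtype.ext
  have h := ExteriorAlgebra.ι_add_mul_swap (R := F) u v
  show (wedge2 F v u : ExteriorAlgebra F V) = -(wedge2 F u v : ExteriorAlgebra F V)
  rw [wedge2_val, wedge2_val]
  rw [eq_neg_iff_add_eq_zero, add_comm]
  exact h

lemma extPowMap_wedge2 (f : V →ₗ[F] W) (u v : V) :
    extPowMap F 2 f (wedge2 F u v) = wedge2 F (f u) (f v) := by
  apply Subtype.ext
  show ExteriorAlgebra.map f (ιMulti F 2 ![u, v]) = ιMulti F 2 ![f u, f v]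
  rw [ExteriorAlgebra.map_apply_ιMulti]
  congr 1
  funext i
  fin_cases i <;> simp

end Aux1
section Aux2

open ExteriorAlgebra

variable (F : Type*) {V W : Type*} [Field F] [AddCommGroup V] [Module F V]
  [AddCommGroup W] [Module F W]

/-- `⋀²V` is spanned by the wedges. -/
lemma span_wedge2_top :
    Submodule.span F {w : ⋀[F]^2 V | ∃ u v : V, w = wedge2 F u v} = ⊤ := by
  rw [eq_top_iff]
  rintro x -
  have hval : (x : ExteriorAlgebra F V) ∈
      Submodule.span F (Set.range (ιMulti F 2 (M := V))) := by
    rw [ExteriorAlgebra.ιMulti_span_fixedDegree]; exact x.2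
  have hsub : Set.range (ιMulti F 2 (M := V)) ⊆
      (Submodule.subtype (⋀[F]^2 V)) ''
        {w : ⋀[F]^2 V | ∃ u v : V, w = wedge2 F u v} := by
    rintro _ ⟨m, rfl⟩
    refine ⟨wedge2 F (m 0) (m 1), ⟨m 0, m 1, rfl⟩, ?_⟩
    show (ιMulti F 2 ![m 0, m 1] : ExteriorAlgebra F V) = ιMulti F 2 m
    congr 1
    funext i
    fin_cases i <;> simp
  have : (x : ExteriorAlgebra F V) ∈
      Submodule.map (Submodule.subtype (⋀[F]^2 V))
        (Submodule.span F {w : ⋀[F]^2 V | ∃ u v : V, w = wedge2 F u v}) := by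
    rw [Submodule.map_span]
    exact Submodule.span_mono hsub hval
  obtain ⟨y, hy, hyx⟩ := this
  rwa [show y = x from Subtype.ext hyx] at hy

/-- Bilinear expansion of a wedge into spanning sets. -/
lemma wedge2_mem_span {s t : Set V} {u v : V}
    (hu : u ∈ Submodule.span F s) (hv : v ∈ Submodule.span F t) :
    wedge2 F u v ∈
      Submodule.span F {w : ⋀[F]^2 V | ∃ x ∈ s, ∃ y ∈ t, w = wedge2 F x y} := by
  set S := Submodule.span F {w : ⋀[F]^2 V | ∃ x ∈ s, ∃ y ∈ t, w = wedge2 F x y}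
  have key : ∀ x ∈ s, ∀ v' ∈ Submodule.span F t, wedge2 F x v' ∈ S := by
    intro x hx v' hv'
    induction hv' using Submodule.span_induction with
    | mem y hy => exact Submodule.subset_span ⟨x, hx, y, hy, rfl⟩
    | zero => rw [wedge2_zero_right]; exact zero_mem S
    | add a b _ _ h1 h2 => rw [wedge2_add_right]; exact add_mem h1 h2
    | smul c a _ h => rw [wedge2_smul_right]; exact Submodule.smul_mem S c h
  induction hu using Submodule.span_induction with
  | mem x hx => exact key x hx v hv
  | zero => rw [wedge2_zero_left]; exact zero_mem S
  | add a b _ _ h1 h2 => rw [wedge2_add_left]; exact add_mem h1 h2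
  | smul c a _ h => rw [wedge2_smul_left]; exact Submodule.smul_mem S c h

end Aux2
section Aux3

open ExteriorAlgebra

variable {F : Type*} {V : Type*} [Field F] [AddCommGroup V] [Module F V]

/-- The alternating bilinear form `u, v ↦ φ u * ψ v - ψ u * φ v`. -/
noncomputable def altForm (φ ψ : V →ₗ[F] F) : V [⋀^Fin 2]→ₗ[F] F :=
  (Matrix.detRowAlternating (n := Fin 2) (R := F)).compLinearMap
    (LinearMap.pi ![φ, ψ])

lemma altForm_apply (φ ψ : V →ₗ[F] F) (u v : V) :
    altForm φ ψ ![u, v] = φ u * ψ v - ψ u * φ v := by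
  show Matrix.detRowAlternating (fun i => LinearMap.pi ![φ, ψ] (![u, v] i)) = _
  show Matrix.det (Matrix.of fun i => LinearMap.pi ![φ, ψ] (![u, v] i)) = _
  rw [Matrix.det_fin_two]
  simp [LinearMap.pi_apply]

/-- The degree-indexed family which is `altForm φ ψ` in degree 2 and `0` elsewhere. -/
noncomputable def coordFam (φ ψ : V →ₗ[F] F) : (i : ℕ) → V [⋀^Fin i]→ₗ[F] F :=
  Function.update (fun i => (0 : V [⋀^Fin i]→ₗ[F] F)) 2 (altForm φ ψ)

/-- The coordinate functional on `⋀²V` given by an alternating bilinear form. -/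
noncomputable def coordW (φ ψ : V →ₗ[F] F) : (⋀[F]^2 V) →ₗ[F] F :=
  (ExteriorAlgebra.liftAlternating (coordFam φ ψ)).comp
    (Submodule.subtype (⋀[F]^2 V))

lemma coordW_wedge2 (φ ψ : V →ₗ[F] F) (u v : V) :
    coordW φ ψ (wedge2 F u v) = φ u * ψ v - ψ u * φ v := by
  show ExteriorAlgebra.liftAlternating _ ((wedge2 F u v : ExteriorAlgebra F V)) = _
  rw [wedge2_val, ExteriorAlgebra.liftAlternating_ι_mul,
    ExteriorAlgebra.liftAlternating_ι]
  show ((coordFam φ ψ) 2).curryLeft u ![v] = _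
  rw [show (coordFam φ ψ) 2 = altForm φ ψ from Function.update_self _ _ _]
  show altForm φ ψ (Matrix.vecCons u ![v]) = _
  exact altForm_apply φ ψ u v

end Aux3
section Aux4

open ExteriorAlgebra

variable {F : Type*} {V : Type*} [Field F] [AddCommGroup V] [Module F V]
  {ι : Type*} [Fintype ι] [DecidableEq ι] (e : Module.Basis ι F V)

lemma coord_basis (a x : ι) : e.coord a (e x) = if x = a then 1 else 0 := by
  rw [Module.Basis.coord_apply, Module.Basis.repr_self, Finsupp.single_apply]

lemma coordW_basis (a b x y : ι) :
    coordW (e.coord a) (e.coord b) (wedge2 F (e x) (e y)) =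
      (if x = a then (1:F) else 0) * (if y = b then 1 else 0) -
      (if x = b then (1:F) else 0) * (if y = a then 1 else 0) := by
  rw [coordW_wedge2, coord_basis, coord_basis, coord_basis, coord_basis]

/-- The basis wedges span `⋀²V`. -/
lemma span_basis_wedges :
    Submodule.span F {w : ⋀[F]^2 V | ∃ x y : ι, w = wedge2 F (e x) (e y)} = ⊤ := by
  rw [eq_top_iff, ← span_wedge2_top (F := F) (V := V)]
  rw [Submodule.span_le]
  rintro w ⟨u, v, rfl⟩
  have hu : u ∈ Submodule.span F (Set.range e) := by rw [e.span_eq]; trivial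
  have hv : v ∈ Submodule.span F (Set.range e) := by rw [e.span_eq]; trivial
  refine Submodule.span_mono ?_ (wedge2_mem_span F hu hv)
  rintro w ⟨x, ⟨i, rfl⟩, y, ⟨j, rfl⟩, rfl⟩
  exact ⟨i, j, rfl⟩

/-- A diagonal automorphism with respect to a basis. -/
noncomputable def diagEquiv (c : ι → Fˣ) : V ≃ₗ[F] V :=
  LinearEquiv.ofLinear (e.constr F fun x => (c x : F) • e x)
    (e.constr F fun x => (((c x)⁻¹ : Fˣ) : F) • e x)
    (by
      apply e.ext
      intro x
      rw [LinearMap.comp_apply, Module.Basis.constr_basis, map_smul, Module.Basis.constr_basis,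
        LinearMap.id_apply, smul_smul, Units.inv_mul, one_smul])
    (by
      apply e.ext
      intro x
      rw [LinearMap.comp_apply, Module.Basis.constr_basis, map_smul, Module.Basis.constr_basis,
        LinearMap.id_apply, smul_smul, Units.mul_inv, one_smul])

lemma diagEquiv_apply (c : ι → Fˣ) (x : ι) :
    diagEquiv e c (e x) = (c x : F) • e x := by
  rw [diagEquiv, LinearEquiv.ofLinear_apply, Module.Basis.constr_basis]

/-- A transvection-like automorphism `e a ↦ e a + e b` with respect to a basis. -/
noncomputable def transvEquiv (a b : ι) (hab : a ≠ b) : V ≃ₗ[F] V :=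
  LinearEquiv.ofLinear (e.constr F fun x => if x = a then e a + e b else e x)
    (e.constr F fun x => if x = a then e a - e b else e x)
    (by
      apply e.ext
      intro x
      by_cases hx : x = a
      · subst hx
        rw [LinearMap.comp_apply, Module.Basis.constr_basis, if_pos rfl, map_sub,
          Module.Basis.constr_basis, Module.Basis.constr_basis, if_pos rfl, if_neg (Ne.symm hab),
          LinearMap.id_apply]
        abel
      · rw [LinearMap.comp_apply, Module.Basis.constr_basis, if_neg hx, Module.Basis.constr_basis,
          if_neg hx, LinearMap.id_apply])
    (by
      apply e.ext
      intro x
      by_cases hx : x = a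
      · subst hx
        rw [LinearMap.comp_apply, Module.Basis.constr_basis, if_pos rfl, map_add,
          Module.Basis.constr_basis, Module.Basis.constr_basis, if_pos rfl, if_neg (Ne.symm hab),
          LinearMap.id_apply]
        abel
      · rw [LinearMap.comp_apply, Module.Basis.constr_basis, if_neg hx, Module.Basis.constr_basis,
          if_neg hx, LinearMap.id_apply])

lemma transvEquiv_apply_same (a b : ι) (hab : a ≠ b) :
    transvEquiv e a b hab (e a) = e a + e b := by
  rw [transvEquiv, LinearEquiv.ofLinear_apply, Module.Basis.constr_basis, if_pos rfl]

lemma transvEquiv_apply_other (a b : ι) (hab : a ≠ b) {x : ι} (hx : x ≠ a) :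
    transvEquiv e a b hab (e x) = e x := by
  rw [transvEquiv, LinearEquiv.ofLinear_apply, Module.Basis.constr_basis, if_neg hx]

end Aux4
set_option linter.unusedSectionVars false

section Aux5

open ExteriorAlgebra

variable {F : Type*} {V : Type*} [Field F] [AddCommGroup V] [Module F V]
  {ι : Type*} [Fintype ι] [DecidableEq ι] (e : Module.Basis ι F V)

lemma map_diagEquiv_span (c : ι → Fˣ) (L : Set ι) :
    Submodule.map (diagEquiv e c).toLinearMap (Submodule.span F (e '' L)) =
      Submodule.span F (e '' L) := by
  rw [Submodule.map_span]
  apply le_antisymm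
  · rw [Submodule.span_le]
    rintro _ ⟨_, ⟨x, hx, rfl⟩, rfl⟩
    show (diagEquiv e c) (e x) ∈ _
    rw [diagEquiv_apply]
    exact Submodule.smul_mem _ _ (Submodule.subset_span ⟨x, hx, rfl⟩)
  · rw [Submodule.span_le]
    rintro _ ⟨x, hx, rfl⟩
    have : e x = (((c x)⁻¹ : Fˣ) : F) • (diagEquiv e c).toLinearMap (e x) := by
      show e x = (((c x)⁻¹ : Fˣ) : F) • (diagEquiv e c) (e x)
      rw [diagEquiv_apply, smul_smul, Units.inv_mul, one_smul]
    rw [this]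
    exact Submodule.smul_mem _ _
      (Submodule.subset_span ⟨e x, ⟨x, hx, rfl⟩, rfl⟩)

lemma map_transvEquiv_span (a b : ι) (hab : a ≠ b) (L : Set ι)
    (hL : a ∈ L → b ∈ L) :
    Submodule.map (transvEquiv e a b hab).toLinearMap (Submodule.span F (e '' L)) =
      Submodule.span F (e '' L) := by
  rw [Submodule.map_span]
  by_cases ha : a ∈ L
  · have hb := hL ha
    apply le_antisymm
    · rw [Submodule.span_le]
      rintro _ ⟨_, ⟨x, hx, rfl⟩, rfl⟩
      show (transvEquiv e a b hab) (e x) ∈ _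
      by_cases hxa : x = a
      · rw [hxa, transvEquiv_apply_same]
        exact add_mem (Submodule.subset_span ⟨a, ha, rfl⟩)
          (Submodule.subset_span ⟨b, hb, rfl⟩)
      · rw [transvEquiv_apply_other e a b hab hxa]
        exact Submodule.subset_span ⟨x, hx, rfl⟩
    · rw [Submodule.span_le]
      rintro _ ⟨x, hx, rfl⟩
      by_cases hxa : x = a
      · rw [hxa]
        have : e a = (transvEquiv e a b hab).toLinearMap (e a) -
            (transvEquiv e a b hab).toLinearMap (e b) := by
          show e a = (transvEquiv e a b hab) (e a) - (transvEquiv e a b hab) (e b)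
          rw [transvEquiv_apply_same, transvEquiv_apply_other e a b hab (Ne.symm hab)]
          abel
        rw [this]
        exact sub_mem (Submodule.subset_span ⟨e a, ⟨a, ha, rfl⟩, rfl⟩)
          (Submodule.subset_span ⟨e b, ⟨b, hb, rfl⟩, rfl⟩)
      · have : e x = (transvEquiv e a b hab).toLinearMap (e x) :=
          (transvEquiv_apply_other e a b hab hxa).symm
        rw [this]
        exact Submodule.subset_span ⟨e x, ⟨x, hx, rfl⟩, rfl⟩
  · have himg : (transvEquiv e a b hab).toLinearMap '' (e '' L) = e '' L := by
      apply Set.image_congr ?_ |>.trans (Set.image_id _)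
      rintro _ ⟨x, hx, rfl⟩
      exact transvEquiv_apply_other e a b hab (fun h => ha (h ▸ hx))
    rw [himg]

end Aux5
section Aux6

open ExteriorAlgebra

variable {F : Type*} {V : Type*} [Field F] [AddCommGroup V] [Module F V]
  {ι : Type*} [Fintype ι] [DecidableEq ι] (e : Module.Basis ι F V)

/-- The "projection-like" operator attached to a basis index. -/
noncomputable def PPop (h2 : (2:F) ≠ 0) (a : ι) : (⋀[F]^2 V) →ₗ[F] (⋀[F]^2 V) :=
  extPowMap F 2 (diagEquiv e (fun x => if x = a then Units.mk0 2 h2 else 1)).toLinearMap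
    - LinearMap.id

lemma PPop_wedge (h2 : (2:F) ≠ 0) (a x y : ι) :
    PPop e h2 a (wedge2 F (e x) (e y)) =
      (if x = a ∨ y = a then (1:F) else 0) • wedge2 F (e x) (e y) := by
  have hD : ∀ z : ι,
      (diagEquiv e (fun x => if x = a then Units.mk0 2 h2 else 1)).toLinearMap (e z)
        = (if z = a then (2:F) else 1) • e z := by
    intro z
    show (diagEquiv e _) (e z) = _
    rw [diagEquiv_apply]
    by_cases hz : z = a <;> simp [hz]
  rw [PPop, LinearMap.sub_apply, LinearMap.id_apply, extPowMap_wedge2, hD, hD,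
    wedge2_smul_left, wedge2_smul_right, smul_smul]
  by_cases hx : x = a
  · by_cases hy : y = a
    · subst hx; rw [hy, wedge2_self]
      simp
    · rw [if_pos hx, if_neg hy, if_pos (Or.inl hx)]
      norm_num
      rw [two_smul]
      abel
  · by_cases hy : y = a
    · rw [if_neg hx, if_pos hy, if_pos (Or.inr hy)]
      norm_num
      rw [two_smul]
      abel
    · rw [if_neg hx, if_neg hy, if_neg (by tauto)]
      norm_num

lemma PPop_comp (h2 : (2:F) ≠ 0) (a b : ι) (hab : a ≠ b) :
    (PPop e h2 a).comp (PPop e h2 b) =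
      (coordW (e.coord a) (e.coord b)).smulRight (wedge2 F (e a) (e b)) := by
  apply LinearMap.ext_on (span_basis_wedges e)
  rintro _ ⟨x, y, rfl⟩
  rw [LinearMap.comp_apply, PPop_wedge, map_smul, PPop_wedge,
    LinearMap.smulRight_apply, coordW_basis]
  by_cases hxa : x = a <;> by_cases hxb : x = b <;> by_cases hya : y = a <;>
      by_cases hyb : y = b <;>
    simp_all [wedge2_self, hab, Ne.symm hab]
  exact wedge2_swap F (e a) (e b)

end Aux6
section Aux7

open ExteriorAlgebra

variable {F : Type*} {V : Type*} [Field F] [AddCommGroup V] [Module F V]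
  {ι : Type*} [Fintype ι] [DecidableEq ι] (e : Module.Basis ι F V)

lemma sum_coordW_eq :
    ((2:F) • (LinearMap.id : (⋀[F]^2 V) →ₗ[F] (⋀[F]^2 V))) =
      ∑ p ∈ Finset.univ.offDiag,
        (coordW (e.coord p.1) (e.coord p.2)).smulRight (wedge2 F (e p.1) (e p.2)) := by
  apply LinearMap.ext_on (span_basis_wedges e)
  rintro _ ⟨x, y, rfl⟩
  rw [LinearMap.smul_apply, LinearMap.id_apply, LinearMap.sum_apply]
  by_cases hxy : x = y
  · subst hxy
    rw [wedge2_self, smul_zero]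
    symm
    apply Finset.sum_eq_zero
    rintro ⟨a, b⟩ hp
    simp
  · have hmem1 : ((x, y) : ι × ι) ∈ Finset.univ.offDiag := by
      simp [Finset.mem_offDiag, hxy]
    have hmem2 : ((y, x) : ι × ι) ∈ Finset.univ.offDiag := by
      simp [Finset.mem_offDiag, Ne.symm hxy]
    have hsub : ({(x, y), (y, x)} : Finset (ι × ι)) ⊆ Finset.univ.offDiag := by
      intro p hp
      rcases Finset.mem_insert.mp hp with h | h
      · exact h ▸ hmem1
      · exact (Finset.mem_singleton.mp h) ▸ hmem2
    rw [← Finset.sum_subset hsub]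
    · have hne : ((x, y) : ι × ι) ≠ (y, x) := by
        intro h
        exact hxy (congrArg Prod.fst h)
      rw [Finset.sum_insert (by simp [hne]), Finset.sum_singleton]
      rw [LinearMap.smulRight_apply, LinearMap.smulRight_apply, coordW_basis,
        coordW_basis]
      rw [if_pos rfl, if_pos rfl, if_neg hxy, if_neg (Ne.symm hxy)]
      rw [show wedge2 F (e y) (e x) = -wedge2 F (e x) (e y) from wedge2_swap F _ _]
      module
    · rintro ⟨a, b⟩ hp hnotin
      rw [LinearMap.smulRight_apply, coordW_basis]
      have h1 : ¬(x = a ∧ y = b) := by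
        rintro ⟨rfl, rfl⟩
        exact hnotin (by simp)
      have h2 : ¬(x = b ∧ y = a) := by
        rintro ⟨rfl, rfl⟩
        exact hnotin (by simp)
      by_cases hxa : x = a <;> by_cases hyb : y = b <;> by_cases hxb : x = b <;>
        by_cases hya : y = a <;> simp_all

end Aux7
section Aux8

open ExteriorAlgebra

variable {F : Type*} {V : Type*} [Field F] [AddCommGroup V] [Module F V]
  {ι : Type*} [Fintype ι] [DecidableEq ι] (e : Module.Basis ι F V)

lemma connect_class (W : Submodule F (⋀[F]^2 V)) (P : ι → Prop)
    (mv : ∀ x y b : ι, P x → P y → P b → x ≠ y → wedge2 F (e x) (e y) ∈ W →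
      b ≠ x → b ≠ y → wedge2 F (e b) (e y) ∈ W)
    {x0 y0 : ι} (hx0 : P x0) (hy0 : P y0) (hxy0 : x0 ≠ y0)
    (h0 : wedge2 F (e x0) (e y0) ∈ W) :
    ∀ x y, P x → P y → x ≠ y → wedge2 F (e x) (e y) ∈ W := by
  have hswap : ∀ u v : ι, wedge2 F (e u) (e v) ∈ W → wedge2 F (e v) (e u) ∈ W := by
    intro u v h
    rw [wedge2_swap]
    exact neg_mem h
  intro x y hPx hPy hxy
  by_cases hxx0 : x = x0
  · by_cases hyy0 : y = y0
    · rw [hxx0, hyy0]; exact h0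
    · have hyx0 : y ≠ x0 := fun h => hxy (by rw [hxx0, h])
      have h1 := hswap _ _ h0
      have h2 := mv y0 x0 y hy0 hx0 hPy (Ne.symm hxy0) h1 hyy0 hyx0
      have h3 := hswap _ _ h2
      rw [hxx0]; exact h3
  · by_cases hxy0' : x = y0
    · have h1 := hswap _ _ h0
      by_cases hyx0 : y = x0
      · rw [hxy0', hyx0]; exact h1
      · have hyy0 : y ≠ y0 := fun h => hxy (by rw [hxy0', h])
        have h2 := mv x0 y0 y hx0 hy0 hPy hxy0 h0 hyx0 hyy0
        have h3 := hswap _ _ h2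
        rw [hxy0']; exact h3
    · have h1 := mv x0 y0 x hx0 hy0 hPx hxy0 h0 hxx0 hxy0'
      by_cases hyy0 : y = y0
      · rw [hyy0]; exact h1
      · have h2 := hswap _ _ h1
        have h3 := mv y0 x y hy0 hPx hPy (Ne.symm hxy0') h2 hyy0 (Ne.symm hxy)
        exact hswap _ _ h3

/-- `lambda2U` as a span of wedges of elements of `U`. -/
lemma lambda2U_eq_span (U : Submodule F V) :
    lambda2U F U =
      Submodule.span F {x : ⋀[F]^2 V | ∃ u ∈ U, ∃ v ∈ U, x = wedge2 F u v} := by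
  apply le_antisymm
  · rintro _ ⟨y, rfl⟩
    have hy : y ∈ Submodule.span F {w : ⋀[F]^2 (↥U) | ∃ u v : ↥U, w = wedge2 F u v} := by
      rw [span_wedge2_top]; trivial
    have : extPowMap F 2 U.subtype y ∈
        Submodule.map (extPowMap F 2 U.subtype)
          (Submodule.span F {w : ⋀[F]^2 (↥U) | ∃ u v : ↥U, w = wedge2 F u v}) :=
      ⟨y, hy, rfl⟩
    rw [Submodule.map_span] at this
    refine Submodule.span_mono ?_ this
    rintro _ ⟨w, ⟨u, v, rfl⟩, rfl⟩
    rw [extPowMap_wedge2]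
    exact ⟨u, u.2, v, v.2, rfl⟩
  · rw [Submodule.span_le]
    rintro _ ⟨u, hu, v, hv, rfl⟩
    refine ⟨wedge2 F (⟨u, hu⟩ : U) (⟨v, hv⟩ : U), ?_⟩
    rw [extPowMap_wedge2]
    rfl

end Aux8
theorem c1_exterior_square_uniserial
    (F V : Type*) [Field F] [Fintype F] [AddCommGroup V] [Module F V]
    [FiniteDimensional F V] (hodd : ringChar F ≠ 2)
    (hdim : 2 < Module.finrank F V)
    (U : Submodule F V) (hUbot : U ≠ ⊥) (hUtop : U ≠ ⊤) :
    -- `Λ²V` is uniserial as an `H`-module, with submodule lattice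
    -- `{0} ⊆ Λ²U ⊆ U ∧ V ⊆ Λ²V`:
    (∀ W : Submodule F (↥(⋀[F]^2 V)),
      (∀ (g : V ≃ₗ[F] V), Submodule.map g.toLinearMap U = U →
        ∀ x ∈ W, extPowMap F 2 g.toLinearMap x ∈ W) →
      W = ⊥ ∨ W = lambda2U F U ∨ W = UwedgeV F U ∨ W = ⊤) ∧
    -- in particular, `Λ²V` is a reducible `H`-module:
    (∃ W : Submodule F (↥(⋀[F]^2 V)),
      (∀ (g : V ≃ₗ[F] V), Submodule.map g.toLinearMap U = U →
        ∀ x ∈ W, extPowMap F 2 g.toLinearMap x ∈ W) ∧ W ≠ ⊥ ∧ W ≠ ⊤) := by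
  classical
  have h2 : (2:F) ≠ 0 := Ring.two_ne_zero hodd
  obtain ⟨U', hcompl⟩ := Submodule.exists_isCompl U
  set k := Module.finrank F U with hkdef
  set m := Module.finrank F U' with hmdef
  let bU : Module.Basis (Fin k) F U := Module.finBasis F U
  let bU' : Module.Basis (Fin m) F U' := Module.finBasis F U'
  let e : Module.Basis (Fin k ⊕ Fin m) F V :=
    (bU.prod bU').map (Submodule.prodEquivOfIsCompl U U' hcompl)
  have heL : ∀ i, e (Sum.inl i) = (bU i : V) := by
    intro i
    simp [e, Module.Basis.prod_apply, Submodule.coe_prodEquivOfIsCompl']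
  set L : Set (Fin k ⊕ Fin m) := Set.range Sum.inl with hLdef
  have hinlL : ∀ i : Fin k, Sum.inl i ∈ L := fun i => ⟨i, rfl⟩
  have hinrL : ∀ j : Fin m, Sum.inr j ∉ L := by
    rintro j ⟨t, ht⟩
    simp at ht
  have hUspan : U = Submodule.span F (e '' L) := by
    have himg : e '' L = Subtype.val '' Set.range bU := by
      ext v
      constructor
      · rintro ⟨_, ⟨i, rfl⟩, rfl⟩
        exact ⟨bU i, ⟨i, rfl⟩, (heL i).symm⟩
      · rintro ⟨_, ⟨i, rfl⟩, rfl⟩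
        exact ⟨Sum.inl i, ⟨i, rfl⟩, heL i⟩
    rw [himg,
      show (Subtype.val '' Set.range ⇑bU : Set V) = ⇑U.subtype '' Set.range ⇑bU from rfl,
      ← Submodule.map_span, bU.span_eq, Submodule.map_subtype_top]
  have hUmem : ∀ i, e (Sum.inl i) ∈ U := fun i => (heL i) ▸ (bU i).2
  have hcoord0 : ∀ a : Fin k ⊕ Fin m, a ∉ L → ∀ u ∈ U, e.coord a u = 0 := by
    intro a ha u hu
    rw [hUspan] at hu
    induction hu using Submodule.span_induction with
    | mem x hx =>
        obtain ⟨z, hz, rfl⟩ := hx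
        rw [coord_basis, if_neg]
        intro h
        exact ha (h ▸ hz)
    | zero => simp
    | add a b _ _ h1 h2 => rw [map_add, h1, h2, add_zero]
    | smul c a _ h => rw [map_smul, h, smul_zero]
  have hkpos : 0 < k := by
    rw [hkdef]
    have : Nontrivial U := Submodule.nontrivial_iff_ne_bot.mpr hUbot
    exact Module.finrank_pos
  have hU'bot : U' ≠ ⊥ := by
    intro h
    have := codisjoint_iff.mp hcompl.codisjoint
    rw [h, sup_bot_eq] at this
    exact hUtop this
  have hmpos : 0 < m := by
    rw [hmdef]
    have : Nontrivial U' := Submodule.nontrivial_iff_ne_bot.mpr hU'bot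
    exact Module.finrank_pos
  have hkm : k + m = Module.finrank F V := Submodule.finrank_add_eq_of_isCompl hcompl
  -- nonvanishing of distinct basis wedges
  have hwne : ∀ x y : Fin k ⊕ Fin m, x ≠ y → wedge2 F (e x) (e y) ≠ 0 := by
    intro x y hxy h0
    have h1 := coordW_basis e x y x y
    rw [h0, map_zero] at h1
    have hyx := Ne.symm hxy
    simp [hxy, hyx] at h1
  constructor
  · -- Part 1: classification
    intro W hW
    have hmove : ∀ x y b : Fin k ⊕ Fin m, x ≠ y → wedge2 F (e x) (e y) ∈ W →
        b ≠ x → b ≠ y → (x ∈ L → b ∈ L) → wedge2 F (e b) (e y) ∈ W := by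
      intro x y b hxy hw hbx hby hcond
      have hU : Submodule.map (transvEquiv e x b (Ne.symm hbx)).toLinearMap U = U := by
        rw [hUspan]
        exact map_transvEquiv_span e x b (Ne.symm hbx) L hcond
      have hT := hW (transvEquiv e x b (Ne.symm hbx)) hU _ hw
      rw [extPowMap_wedge2] at hT
      simp only [LinearEquiv.coe_coe] at hT
      rw [transvEquiv_apply_same e x b (Ne.symm hbx),
        transvEquiv_apply_other e x b (Ne.symm hbx) (Ne.symm hxy),
        wedge2_add_left] at hT
      have := sub_mem hT hw
      simpa using this
    have hswapW : ∀ x y : Fin k ⊕ Fin m,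
        wedge2 F (e x) (e y) ∈ W → wedge2 F (e y) (e x) ∈ W := by
      intro x y h
      rw [wedge2_swap]
      exact neg_mem h
    have hPP : ∀ a : Fin k ⊕ Fin m, ∀ w ∈ W, PPop e h2 a w ∈ W := by
      intro a w hw
      have hU : Submodule.map
          (diagEquiv e fun x => if x = a then Units.mk0 2 h2 else 1).toLinearMap U = U := by
        rw [hUspan]
        exact map_diagEquiv_span e _ L
      have hg := hW _ hU w hw
      simp only [PPop, LinearMap.sub_apply, LinearMap.id_apply]
      exact sub_mem hg hw
    have hproj : ∀ w ∈ W, ∀ a b : Fin k ⊕ Fin m, a ≠ b →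
        (coordW (e.coord a) (e.coord b) w) • wedge2 F (e a) (e b) ∈ W := by
      intro w hw a b hab
      have h1 := hPP a _ (hPP b w hw)
      rw [← LinearMap.comp_apply, PPop_comp e h2 a b hab, LinearMap.smulRight_apply] at h1
      exact h1
    set SW : Set (⋀[F]^2 V) :=
      {v | ∃ a b : Fin k ⊕ Fin m, a ≠ b ∧ wedge2 F (e a) (e b) ∈ W ∧
        v = wedge2 F (e a) (e b)} with hSWdef
    have hWle : W ≤ Submodule.span F SW := by
      intro w hw
      have h2w : (2:F) • w = ∑ p ∈ Finset.univ.offDiag,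
          (coordW (e.coord p.1) (e.coord p.2) w) • wedge2 F (e p.1) (e p.2) := by
        have := LinearMap.congr_fun (sum_coordW_eq e) w
        simpa [LinearMap.sum_apply] using this
      have hmem2 : (2:F) • w ∈ Submodule.span F SW := by
        rw [h2w]
        apply Submodule.sum_mem
        rintro ⟨a, b⟩ hp
        have hab : a ≠ b := (Finset.mem_offDiag.mp hp).2.2
        by_cases hc : coordW (e.coord a) (e.coord b) w = 0
        · rw [hc, zero_smul]
          exact zero_mem _
        · have hterm := hproj w hw a b hab
          have hwmem : wedge2 F (e a) (e b) ∈ W := by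
            have := Submodule.smul_mem W (coordW (e.coord a) (e.coord b) w)⁻¹ hterm
            rwa [smul_smul, inv_mul_cancel₀ hc, one_smul] at this
          exact Submodule.smul_mem _ _ (Submodule.subset_span ⟨a, b, hab, hwmem, rfl⟩)
      have hrew : w = (2:F)⁻¹ • ((2:F) • w) := by
        rw [smul_smul, inv_mul_cancel₀ h2, one_smul]
      rw [hrew]
      exact Submodule.smul_mem _ _ hmem2
    have hGB : (∃ i j, wedge2 F (e (Sum.inl i)) (e (Sum.inr j)) ∈ W) →
        ∀ i j, wedge2 F (e (Sum.inl i)) (e (Sum.inr j)) ∈ W := by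
      rintro ⟨i0, j0, h0⟩ i j
      have hstep1 : wedge2 F (e (Sum.inl i0)) (e (Sum.inr j)) ∈ W := by
        by_cases hj : j = j0
        · rw [hj]
          exact h0
        · have h1 := hswapW _ _ h0
          have h3 := hmove (Sum.inr j0) (Sum.inl i0) (Sum.inr j) (by simp) h1
            (by simp [hj]) (by simp) (fun h' => absurd h' (hinrL j0))
          exact hswapW _ _ h3
      by_cases hi : i = i0
      · rw [hi]
        exact hstep1
      · exact hmove (Sum.inl i0) (Sum.inr j) (Sum.inl i) (by simp) hstep1
          (by simp [hi]) (by simp) (fun _ => hinlL i)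
    have hGA : (∃ i j : Fin k, i ≠ j ∧ wedge2 F (e (Sum.inl i)) (e (Sum.inl j)) ∈ W) →
        ∀ i j : Fin k, i ≠ j → wedge2 F (e (Sum.inl i)) (e (Sum.inl j)) ∈ W := by
      rintro ⟨i0, j0, hij0, h0⟩ i j hij
      refine connect_class e W (fun z => z ∈ L)
        (fun x y b _ _ hb hxy hw hbx hby => hmove x y b hxy hw hbx hby (fun _ => hb))
        (hinlL i0) (hinlL j0) (by simp [hij0]) h0
        (Sum.inl i) (Sum.inl j) (hinlL i) (hinlL j) (by simp [hij])
    have hGC : (∃ i j : Fin m, i ≠ j ∧ wedge2 F (e (Sum.inr i)) (e (Sum.inr j)) ∈ W) →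
        ∀ i j : Fin m, i ≠ j → wedge2 F (e (Sum.inr i)) (e (Sum.inr j)) ∈ W := by
      rintro ⟨i0, j0, hij0, h0⟩ i j hij
      refine connect_class e W (fun z => z ∉ L)
        (fun x y b hx _ _ hxy hw hbx hby => hmove x y b hxy hw hbx hby
          (fun h' => absurd h' hx))
        (hinrL i0) (hinrL j0) (by simp [hij0]) h0
        (Sum.inr i) (Sum.inr j) (hinrL i) (hinrL j) (by simp [hij])
    have hG3 : (∃ i j : Fin m, i ≠ j ∧ wedge2 F (e (Sum.inr i)) (e (Sum.inr j)) ∈ W) →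
        ∃ i j, wedge2 F (e (Sum.inl i)) (e (Sum.inr j)) ∈ W := by
      rintro ⟨i, j, hij, h⟩
      refine ⟨⟨0, hkpos⟩, j, ?_⟩
      exact hmove (Sum.inr i) (Sum.inr j) (Sum.inl ⟨0, hkpos⟩) (by simp [hij]) h
        (by simp) (by simp) (fun h' => absurd h' (hinrL i))
    have hG4 : (∃ i j, wedge2 F (e (Sum.inl i)) (e (Sum.inr j)) ∈ W) → 2 ≤ k →
        ∃ i j : Fin k, i ≠ j ∧ wedge2 F (e (Sum.inl i)) (e (Sum.inl j)) ∈ W := by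
      rintro ⟨i, j, h⟩ hk2
      set i' : Fin k := if i = ⟨0, hkpos⟩ then ⟨1, hk2⟩ else ⟨0, hkpos⟩ with hi'def
      have hii' : i' ≠ i := by
        by_cases hi0 : i = ⟨0, hkpos⟩
        · rw [hi'def, if_pos hi0, hi0]
          intro hcon
          exact absurd (congrArg Fin.val hcon) (by norm_num)
        · rw [hi'def, if_neg hi0]
          exact fun hcon => hi0 hcon.symm
      have h1 := hswapW _ _ h
      have hres := hmove (Sum.inr j) (Sum.inl i) (Sum.inl i') (by simp) h1
        (by simp) (by simp [hii']) (fun h' => absurd h' (hinrL j))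
      exact ⟨i', i, hii', hres⟩
    have hAmem : ∀ i j : Fin k,
        wedge2 F (e (Sum.inl i)) (e (Sum.inl j)) ∈ lambda2U F U := by
      intro i j
      rw [lambda2U_eq_span]
      exact Submodule.subset_span ⟨_, hUmem i, _, hUmem j, rfl⟩
    have hABmem : ∀ (i : Fin k) (x : Fin k ⊕ Fin m),
        wedge2 F (e (Sum.inl i)) (e x) ∈ UwedgeV F U :=
      fun i x => Submodule.subset_span ⟨_, _, hUmem i, rfl⟩
    have hAspanle : (∀ i j : Fin k, i ≠ j → wedge2 F (e (Sum.inl i)) (e (Sum.inl j)) ∈ W) →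
        lambda2U F U ≤ W := by
      intro hall
      rw [lambda2U_eq_span, Submodule.span_le]
      rintro _ ⟨u, hu, v, hv, rfl⟩
      have hu' : u ∈ Submodule.span F (e '' L) := hUspan ▸ hu
      have hv' : v ∈ Submodule.span F (e '' L) := hUspan ▸ hv
      refine Submodule.span_le.mpr ?_ (wedge2_mem_span F hu' hv')
      rintro _ ⟨_, ⟨p, hp, rfl⟩, _, ⟨q, hq, rfl⟩, rfl⟩
      obtain ⟨i, rfl⟩ := hp
      obtain ⟨j, rfl⟩ := hq
      by_cases hij : i = j
      · rw [hij, wedge2_self]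
        exact zero_mem W
      · exact hall i j hij
    have hABspanle : (∀ (i : Fin k) (x : Fin k ⊕ Fin m),
        wedge2 F (e (Sum.inl i)) (e x) ∈ W) → UwedgeV F U ≤ W := by
      intro hall
      rw [UwedgeV, Submodule.span_le]
      rintro _ ⟨u, v, hu, rfl⟩
      have hu' : u ∈ Submodule.span F (e '' L) := hUspan ▸ hu
      have hv' : v ∈ Submodule.span F (Set.range e) := by
        rw [e.span_eq]
        trivial
      refine Submodule.span_le.mpr ?_ (wedge2_mem_span F hu' hv')
      rintro _ ⟨_, ⟨p, hp, rfl⟩, _, ⟨x, rfl⟩, rfl⟩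
      obtain ⟨i, rfl⟩ := hp
      exact hall i x
    by_cases hasB : ∃ i j, wedge2 F (e (Sum.inl i)) (e (Sum.inr j)) ∈ W
    · by_cases hasC : ∃ i j : Fin m, i ≠ j ∧ wedge2 F (e (Sum.inr i)) (e (Sum.inr j)) ∈ W
      · right; right; right
        apply le_antisymm le_top
        rw [← span_basis_wedges e, Submodule.span_le]
        rintro _ ⟨x, y, rfl⟩
        by_cases hxy : x = y
        · rw [hxy, wedge2_self]
          exact zero_mem W
        · cases x with
          | inl i =>
            cases y with
            | inl j =>
              have hij : i ≠ j := fun h => hxy (by rw [h])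
              have hk2 : 2 ≤ k := by
                have h1 := i.isLt
                have h2 := j.isLt
                by_contra hlt
                push_neg at hlt
                exact hij (Fin.ext (by omega))
              exact hGA (hG4 hasB hk2) i j hij
            | inr j => exact hGB hasB i j
          | inr i =>
            cases y with
            | inl j => exact hswapW _ _ (hGB hasB j i)
            | inr j =>
              have hij : i ≠ j := fun h => hxy (by rw [h])
              exact hGC hasC i j hij
      · right; right; left
        apply le_antisymm
        · refine hWle.trans (Submodule.span_le.mpr ?_)
          rintro _ ⟨a, b, hab, hmemW, rfl⟩
          cases a with
          | inl i => exact hABmem i b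
          | inr i =>
            cases b with
            | inl j =>
              rw [wedge2_swap]
              exact neg_mem (hABmem j (Sum.inr i))
            | inr j =>
              exact absurd ⟨i, j, fun h => hab (by rw [h]), hmemW⟩ hasC
        · apply hABspanle
          intro i x
          cases x with
          | inl j =>
            by_cases hij : i = j
            · rw [hij, wedge2_self]
              exact zero_mem W
            · have hk2 : 2 ≤ k := by
                have h1 := i.isLt
                have h2 := j.isLt
                by_contra hlt
                push_neg at hlt
                exact hij (Fin.ext (by omega))
              exact hGA (hG4 hasB hk2) i j hij
          | inr j => exact hGB hasB i j
    · have hnoC : ¬ ∃ i j : Fin m, i ≠ j ∧ wedge2 F (e (Sum.inr i)) (e (Sum.inr j)) ∈ W :=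
        fun h => hasB (hG3 h)
      by_cases hasA : ∃ i j : Fin k, i ≠ j ∧ wedge2 F (e (Sum.inl i)) (e (Sum.inl j)) ∈ W
      · right; left
        apply le_antisymm
        · refine hWle.trans (Submodule.span_le.mpr ?_)
          rintro _ ⟨a, b, hab, hmemW, rfl⟩
          cases a with
          | inl i =>
            cases b with
            | inl j => exact hAmem i j
            | inr j => exact absurd ⟨i, j, hmemW⟩ hasB
          | inr i =>
            cases b with
            | inl j => exact absurd ⟨j, i, hswapW _ _ hmemW⟩ hasB
            | inr j => exact absurd ⟨i, j, fun h => hab (by rw [h]), hmemW⟩ hnoC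
        · exact hAspanle (fun i j hij => hGA hasA i j hij)
      · left
        have hSWempty : SW = ∅ := by
          ext v
          simp only [hSWdef, Set.mem_setOf_eq, Set.mem_empty_iff_false, iff_false]
          rintro ⟨a, b, hab, hmemW, rfl⟩
          cases a with
          | inl i =>
            cases b with
            | inl j => exact hasA ⟨i, j, fun h => hab (by rw [h]), hmemW⟩
            | inr j => exact hasB ⟨i, j, hmemW⟩
          | inr i =>
            cases b with
            | inl j => exact hasB ⟨j, i, hswapW _ _ hmemW⟩
            | inr j => exact hnoC ⟨i, j, fun h => hab (by rw [h]), hmemW⟩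
        rw [eq_bot_iff]
        refine hWle.trans ?_
        rw [hSWempty, Submodule.span_empty]
  · -- Part 2: reducibility
    have hkm3 : 3 ≤ k + m := by
      rw [hkm]
      omega
    by_cases hm2 : 2 ≤ m
    · refine ⟨UwedgeV F U, ?_, ?_, ?_⟩
      · intro g hg x hx
        have hmap : Submodule.map (extPowMap F 2 g.toLinearMap) (UwedgeV F U) ≤
            UwedgeV F U := by
          rw [UwedgeV, Submodule.map_span, Submodule.span_le]
          rintro _ ⟨_, ⟨u, v, hu, rfl⟩, rfl⟩
          rw [extPowMap_wedge2]
          refine Submodule.subset_span ⟨g.toLinearMap u, g.toLinearMap v, ?_, rfl⟩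
          rw [← hg]
          exact ⟨u, hu, rfl⟩
        exact hmap ⟨x, hx, rfl⟩
      · intro hbot
        have hmem : wedge2 F (e (Sum.inl ⟨0, hkpos⟩)) (e (Sum.inr ⟨0, hmpos⟩)) ∈
            UwedgeV F U := Submodule.subset_span ⟨_, _, hUmem _, rfl⟩
        rw [hbot, Submodule.mem_bot] at hmem
        exact hwne _ _ (by simp) hmem
      · intro htop
        have hvanish : ∀ v ∈ UwedgeV F U,
            coordW (e.coord (Sum.inr ⟨0, hmpos⟩)) (e.coord (Sum.inr ⟨1, hm2⟩)) v = 0 := by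
          intro v hv
          induction hv using Submodule.span_induction with
          | mem x hx =>
            obtain ⟨u, w, hu, rfl⟩ := hx
            rw [coordW_wedge2, hcoord0 _ (hinrL _) u hu, hcoord0 _ (hinrL _) u hu]
            ring
          | zero => simp
          | add a b _ _ h1 h2 => rw [map_add, h1, h2, add_zero]
          | smul c a _ h => rw [map_smul, h, smul_zero]
        have hmem : wedge2 F (e (Sum.inr ⟨0, hmpos⟩)) (e (Sum.inr ⟨1, hm2⟩)) ∈
            UwedgeV F U := by
          rw [htop]
          trivial
        have hz := hvanish _ hmem
        rw [coordW_basis, if_pos rfl, if_pos rfl,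
          if_neg (by simp [Fin.ext_iff]), one_mul, zero_mul, sub_zero] at hz
        exact one_ne_zero hz
    · have hk2 : 2 ≤ k := by omega
      refine ⟨lambda2U F U, ?_, ?_, ?_⟩
      · intro g hg x hx
        have hmap : Submodule.map (extPowMap F 2 g.toLinearMap) (lambda2U F U) ≤
            lambda2U F U := by
          rw [lambda2U_eq_span, Submodule.map_span, Submodule.span_le]
          rintro _ ⟨_, ⟨u, hu, v, hv, rfl⟩, rfl⟩
          rw [extPowMap_wedge2]
          refine Submodule.subset_span ⟨g.toLinearMap u, ?_, g.toLinearMap v, ?_, rfl⟩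
          · rw [← hg]
            exact ⟨u, hu, rfl⟩
          · rw [← hg]
            exact ⟨v, hv, rfl⟩
        exact hmap ⟨x, hx, rfl⟩
      · intro hbot
        have hmem : wedge2 F (e (Sum.inl ⟨0, hkpos⟩)) (e (Sum.inl ⟨1, hk2⟩)) ∈
            lambda2U F U := by
          rw [lambda2U_eq_span]
          exact Submodule.subset_span ⟨_, hUmem _, _, hUmem _, rfl⟩
        rw [hbot, Submodule.mem_bot] at hmem
        exact hwne _ _ (by simp [Fin.ext_iff]) hmem
      · intro htop
        have hvanish : ∀ v ∈ lambda2U F U,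
            coordW (e.coord (Sum.inl ⟨0, hkpos⟩)) (e.coord (Sum.inr ⟨0, hmpos⟩)) v = 0 := by
          intro v hv
          rw [lambda2U_eq_span] at hv
          induction hv using Submodule.span_induction with
          | mem x hx =>
            obtain ⟨u, hu, w, hw, rfl⟩ := hx
            rw [coordW_wedge2, hcoord0 _ (hinrL _) u hu, hcoord0 _ (hinrL _) w hw]
            ring
          | zero => simp
          | add a b _ _ h1 h2 => rw [map_add, h1, h2, add_zero]
          | smul c a _ h => rw [map_smul, h, smul_zero]
        have hmem : wedge2 F (e (Sum.inl ⟨0, hkpos⟩)) (e (Sum.inr ⟨0, hmpos⟩)) ∈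
            lambda2U F U := by
          rw [htop]
          trivial
        have hz := hvanish _ hmem
        rw [coordW_basis, if_pos rfl, if_pos rfl] at hz
        rw [if_neg (by simp), one_mul, zero_mul, sub_zero] at hz
        exact one_ne_zero hz
end
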